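/- If there is a simulation f : S ⇒ T between automata with boundary S, T : X → Y with initial states, then S and T have the same set of reduced appearances: the set of reduced appearances of behaviours of S from its initial state equals the set of reduced appearances of behaviours of T from its initial state. -/

import Mathlib

/-- An automaton with boundary `S : X → Y`, where the action sets `X`, `Y`
have trivial (reflexive) actions `eX`, `eY`. -/
structure Aut (X Y : Type) (eX : X) (eY : Y) where
  State : Type
  Motion : Type
  src : Motion → State
  tgt : Motion → State
  refl : State → Motion
  refl_src : ∀ v, src (refl v) = v
  refl_tgt : ∀ v, tgt (refl v) = v
  labL : Motion → X
  labR : Motion → Y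
  labL_refl : ∀ v, labL (refl v) = eX
  labR_refl : ∀ v, labR (refl v) = eY

namespace Aut

variable {X Y Z W : Type} {eX : X} {eY : Y} {eZ : Z} {eW : W}

/-- The binding `S·T` of automata `S : X → Y` and `T : Y → Z`. -/
def bind (S : Aut X Y eX eY) (T : Aut Y Z eY eZ) : Aut X Z eX eZ where
  State := S.State × T.State
  Motion := {p : S.Motion × T.Motion // S.labR p.1 = T.labL p.2}
  src p := (S.src p.val.1, T.src p.val.2)
  tgt p := (S.tgt p.val.1, T.tgt p.val.2)
  refl v := ⟨(S.refl v.1, T.refl v.2), by rw [S.labR_refl, T.labL_refl]⟩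
  refl_src v := by simp [S.refl_src, T.refl_src]
  refl_tgt v := by simp [S.refl_tgt, T.refl_tgt]
  labL p := S.labL p.val.1
  labR p := T.labR p.val.2
  labL_refl v := S.labL_refl v.1
  labR_refl v := T.labR_refl v.2

/-- The product `S×T` of automata `S : X → Y` and `T : Z → W`. -/
def prod (S : Aut X Y eX eY) (T : Aut Z W eZ eW) :
    Aut (X × Z) (Y × W) (eX, eZ) (eY, eW) where
  State := S.State × T.State
  Motion := S.Motion × T.Motion
  src p := (S.src p.1, T.src p.2)
  tgt p := (S.tgt p.1, T.tgt p.2)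
  refl v := (S.refl v.1, T.refl v.2)
  refl_src v := by simp [S.refl_src, T.refl_src]
  refl_tgt v := by simp [S.refl_tgt, T.refl_tgt]
  labL p := (S.labL p.1, T.labL p.2)
  labR p := (S.labR p.1, T.labR p.2)
  labL_refl v := by simp [S.labL_refl, T.labL_refl]
  labR_refl v := by simp [S.labR_refl, T.labR_refl]

/-- The feedback `fb_Y S` of an automaton `S : X×Y → Y×Z`. -/
def fb (S : Aut (X × Y) (Y × Z) (eX, eY) (eY, eZ)) : Aut X Z eX eZ where
  State := S.State
  Motion := {e : S.Motion // (S.labL e).2 = (S.labR e).1}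
  src e := S.src e.val
  tgt e := S.tgt e.val
  refl v := ⟨S.refl v, by rw [S.labL_refl, S.labR_refl]⟩
  refl_src v := S.refl_src v
  refl_tgt v := S.refl_tgt v
  labL e := (S.labL e.val).1
  labR e := (S.labR e.val).2
  labL_refl v := by simp [S.labL_refl]
  labR_refl v := by simp [S.labR_refl]

/-- The identity automaton on an action set `X`. -/
def ident (X : Type) (eX : X) : Aut X X eX eX where
  State := PUnit
  Motion := X
  src _ := PUnit.unit
  tgt _ := PUnit.unit
  refl _ := eX
  refl_src _ := rfl
  refl_tgt _ := rfl
  labL x := x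
  labR x := x
  labL_refl _ := rfl
  labR_refl _ := rfl

end Aut

/-- `IsPath A v l w` : the list of motions `l` is a finite behaviour of `A`
from the state `v` ending at the state `w`. -/
def IsPath {X Y : Type} {eX : X} {eY : Y} (A : Aut X Y eX eY) :
    A.State → List A.Motion → A.State → Prop
  | v, [], w => v = w
  | v, e :: l, w => A.src e = v ∧ IsPath A (A.tgt e) l w

/-- `w` is reachable from `v`: there is a finite (possibly empty) behaviour from `v` to `w`. -/
def Reaches {X Y : Type} {eX : X} {eY : Y} (A : Aut X Y eX eY) (v w : A.State) : Prop :=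
  ∃ l, IsPath A v l w

/-- A state is a deadlock if the only motion out of it is the reflexive motion. -/
def Deadlock {X Y : Type} {eX : X} {eY : Y} (A : Aut X Y eX eY) (v : A.State) : Prop :=
  ∀ e, A.src e = v → e = A.refl v

/-- A behaviour (finite or infinite) of `A` from the state `v0`, encoded as a
finite-or-infinite sequence `Stream'.Seq` of motions. -/
def IsBehaviour {X Y : Type} {eX : X} {eY : Y} (A : Aut X Y eX eY) (v0 : A.State)
    (s : Stream'.Seq A.Motion) : Prop :=
  (∀ e, s.get? 0 = some e → A.src e = v0) ∧
  (∀ k e f, s.get? k = some e → s.get? (k + 1) = some f → A.src f = A.tgt e)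

/-- A comparison of automata: maps on states and motions preserving sources,
targets, reflexive motions and boundary labels. -/
structure Comparison {X Y : Type} {eX : X} {eY : Y} (S T : Aut X Y eX eY) where
  onState : S.State → T.State
  onMotion : S.Motion → T.Motion
  src_eq : ∀ e, T.src (onMotion e) = onState (S.src e)
  tgt_eq : ∀ e, T.tgt (onMotion e) = onState (S.tgt e)
  refl_eq : ∀ v, onMotion (S.refl v) = T.refl (onState v)
  labL_eq : ∀ e, T.labL (onMotion e) = S.labL e
  labR_eq : ∀ e, T.labR (onMotion e) = S.labR e

/-- An isomorphism of automata: bijections on states and motions preserving sources,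
targets, reflexive motions and boundary labels. -/
structure AutIso {X Y : Type} {eX : X} {eY : Y} (S T : Aut X Y eX eY) where
  stateEquiv : S.State ≃ T.State
  motionEquiv : S.Motion ≃ T.Motion
  src_eq : ∀ e, T.src (motionEquiv e) = stateEquiv (S.src e)
  tgt_eq : ∀ e, T.tgt (motionEquiv e) = stateEquiv (S.tgt e)
  refl_eq : ∀ v, motionEquiv (S.refl v) = T.refl (stateEquiv v)
  labL_eq : ∀ e, T.labL (motionEquiv e) = S.labL e
  labR_eq : ∀ e, T.labR (motionEquiv e) = S.labR e

/-- The reachable subautomaton `r(A)` of `A` with initial state `v0`. -/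
def reach {X Y : Type} {eX : X} {eY : Y} (A : Aut X Y eX eY) (v0 : A.State) :
    Aut X Y eX eY where
  State := {v : A.State // Reaches A v0 v}
  Motion := {e : A.Motion // Reaches A v0 (A.src e) ∧ Reaches A v0 (A.tgt e)}
  src e := ⟨A.src e.val, e.property.1⟩
  tgt e := ⟨A.tgt e.val, e.property.2⟩
  refl v := ⟨A.refl v.val, by rw [A.refl_src, A.refl_tgt]; exact ⟨v.property, v.property⟩⟩
  refl_src v := Subtype.ext (A.refl_src v.val)
  refl_tgt v := Subtype.ext (A.refl_tgt v.val)
  labL e := A.labL e.val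
  labR e := A.labR e.val
  labL_refl v := A.labL_refl v.val
  labR_refl v := A.labR_refl v.val

/-- The initial state of `A`, as a state of the reachable subautomaton `r(A)`. -/
def reachInit {X Y : Type} {eX : X} {eY : Y} (A : Aut X Y eX eY) (v0 : A.State) :
    (reach A v0).State :=
  ⟨v0, ⟨[], rfl⟩⟩

/-- A simulation `S ⇒ T` of automata with initial states: a comparison
`r(S) → r(T)` preserving the initial state and satisfying the lifting property. -/
structure Simulation {X Y : Type} {eX : X} {eY : Y} (S T : Aut X Y eX eY)
    (v0 : S.State) (w0 : T.State) where
  comp : Comparison (reach S v0) (reach T w0)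
  init : (comp.onState (reachInit S v0)).val = w0
  lift : ∀ (v : (reach S v0).State) (e : (reach T w0).Motion),
      (reach T w0).src e = comp.onState v →
      ∃ (l : List ((reach S v0).Motion)) (e' : (reach S v0).Motion)
        (v' : (reach S v0).State),
        IsPath (reach S v0) v (l ++ [e']) v' ∧
        (∀ m ∈ l, comp.onMotion m = (reach T w0).refl (comp.onState v)) ∧
        comp.onMotion e' = e

/-- `IsReducedOf ε s t` : `t` is obtained from the (finite or infinite) sequence `s` by
deleting all occurrences of the trivial element `ε`. -/
def IsReducedOf {α : Type} (ε : α) (s t : Stream'.Seq α) : Prop :=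
  ∃ φ : ℕ → ℕ, StrictMono φ ∧
    (∀ m a, t.get? m = some a ↔ (s.get? (φ m) = some a ∧ a ≠ ε)) ∧
    (∀ n a, s.get? n = some a → a ≠ ε → ∃ m, φ m = n)

section AuxProof

open Stream'

variable {X Y : Type} {eX : X} {eY : Y}

lemma isPath_append (A : Aut X Y eX eY) (l1 l2 : List A.Motion) (v w : A.State) :
    IsPath A v (l1 ++ l2) w ↔ ∃ x, IsPath A v l1 x ∧ IsPath A x l2 w := by
  induction l1 generalizing v with
  | nil => simp [IsPath]
  | cons e l ih =>
    rw [List.cons_append]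
    show (A.src e = v ∧ IsPath A (A.tgt e) (l ++ l2) w) ↔ _
    rw [ih]
    constructor
    · rintro ⟨h1, x, h2, h3⟩
      exact ⟨x, ⟨h1, h2⟩, h3⟩
    · rintro ⟨x, ⟨h1, h2⟩, h3⟩
      exact ⟨h1, x, h2, h3⟩

lemma isPath_head {A : Aut X Y eX eY} {v w : A.State} {l : List A.Motion}
    (h : IsPath A v l w) {e} (he : l[0]? = some e) : A.src e = v := by
  cases l with
  | nil => simp at he
  | cons a l =>
    simp at he
    subst he
    exact h.1

lemma isPath_adj {A : Aut X Y eX eY} {v w : A.State} {l : List A.Motion}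
    (h : IsPath A v l w) {n : ℕ} {e e'} (he : l[n]? = some e)
    (he' : l[n + 1]? = some e') : A.src e' = A.tgt e := by
  induction l generalizing v n with
  | nil => simp at he
  | cons a l ih =>
    cases n with
    | zero =>
      simp at he
      subst he
      exact isPath_head h.2 he'
    | succ n => exact ih h.2 he he'

lemma reaches_tgt {A : Aut X Y eX eY} {v0 : A.State} {e : A.Motion}
    (h : Reaches A v0 (A.src e)) : Reaches A v0 (A.tgt e) := by
  obtain ⟨l, hl⟩ := h
  exact ⟨l ++ [e], (isPath_append A l [e] _ _).2 ⟨_, hl, by simp [IsPath]⟩⟩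

/-- The state reached after `k` motions of the sequence `s`, starting from `a0`. -/
def stateAfter (A : Aut X Y eX eY) (a0 : A.State) (s : Stream'.Seq A.Motion) : ℕ → A.State
  | 0 => a0
  | k + 1 => (s.get? k).elim (stateAfter A a0 s k) A.tgt

lemma behaviour_src {A : Aut X Y eX eY} {a0 : A.State} {s : Stream'.Seq A.Motion}
    (h : IsBehaviour A a0 s) : ∀ k e, s.get? k = some e → A.src e = stateAfter A a0 s k := by
  intro k
  induction k with
  | zero => intro e he; simpa [stateAfter] using h.1 e he
  | succ k ih =>
    intro e he
    cases hk : s.get? k with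
    | none => exact absurd (Stream'.Seq.le_stable s (Nat.le_succ k) hk) (by simp [he])
    | some e0 =>
      rw [h.2 k e0 e hk he]
      simp [stateAfter, hk]

lemma reaches_stateAfter {A : Aut X Y eX eY} {a0 : A.State} {s : Stream'.Seq A.Motion}
    (h : IsBehaviour A a0 s) : ∀ k, Reaches A a0 (stateAfter A a0 s k) := by
  intro k
  induction k with
  | zero => exact ⟨[], by simp [stateAfter, IsPath]⟩
  | succ k ih =>
    cases hk : s.get? k with
    | none => simpa [stateAfter, hk] using ih
    | some e =>
      have hsrc : A.src e = stateAfter A a0 s k := behaviour_src h k e hk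
      have hre : Reaches A a0 (A.src e) := by rw [hsrc]; exact ih
      simpa [stateAfter, hk] using reaches_tgt hre

lemma behaviour_reaches {A : Aut X Y eX eY} {a0 : A.State} {s : Stream'.Seq A.Motion}
    (h : IsBehaviour A a0 s) {k e} (he : s.get? k = some e) :
    Reaches A a0 (A.src e) ∧ Reaches A a0 (A.tgt e) := by
  have h1 : Reaches A a0 (A.src e) := by
    rw [behaviour_src h k e he]; exact reaches_stateAfter h k
  exact ⟨h1, reaches_tgt h1⟩

variable {S T : Aut X Y eX eY} {v0 : S.State} {w0 : T.State}

lemma key (f : Simulation S T v0 w0) {s : Stream'.Seq T.Motion} (hs : IsBehaviour T w0 s)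
    (k : ℕ) (v : (reach S v0).State) (hv : (f.comp.onState v).val = stateAfter T w0 s k) :
    ∃ p : List ((reach S v0).Motion) × (reach S v0).State,
      IsPath (reach S v0) v p.1 p.2 ∧
      (f.comp.onState p.2).val = stateAfter T w0 s (k + 1) ∧
      (s.get? k = none → p.1 = [] ∧ p.2 = v) ∧
      ∀ e, s.get? k = some e →
        p.1 ≠ [] ∧
        p.1.map (fun m => (S.labL m.val, S.labR m.val)) =
          List.replicate (p.1.length - 1) (eX, eY) ++ [(T.labL e, T.labR e)] := by
  cases hk : s.get? k with
  | none =>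
    refine ⟨([], v), by simp [IsPath], ?_, fun _ => ⟨rfl, rfl⟩, fun e he => by simp [hk] at he⟩
    simpa [stateAfter, hk] using hv
  | some e =>
    have hre : Reaches T w0 (T.src e) ∧ Reaches T w0 (T.tgt e) := behaviour_reaches hs hk
    have hsrceq : (reach T w0).src ⟨e, hre⟩ = f.comp.onState v := by
      apply Subtype.ext
      show T.src e = (f.comp.onState v).val
      rw [hv, behaviour_src hs k e hk]
    obtain ⟨l, e', v', hpath, hrefl, he'⟩ := f.lift v ⟨e, hre⟩ hsrceq
    refine ⟨(l ++ [e'], v'), hpath, ?_, by simp [hk], ?_⟩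
    · obtain ⟨x, hx1, hx2⟩ := (isPath_append _ l [e'] v v').1 hpath
      have htgt : (reach S v0).tgt e' = v' := hx2.2
      have h2 := f.comp.tgt_eq e'
      rw [htgt, he'] at h2
      have hval : (f.comp.onState v').val = ((reach T w0).tgt (⟨e, hre⟩ : (reach T w0).Motion)).val := by
        rw [← h2]
      rw [hval]
      show T.tgt e = stateAfter T w0 s (k + 1)
      simp [stateAfter, hk]
    · intro e2 he2
      injection he2 with he2'
      subst he2'
      refine ⟨by simp, ?_⟩
      have hlab : ∀ m ∈ l, ((fun m => (S.labL m.val, S.labR m.val)) m) = ((eX, eY) : X × Y) := by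
        intro m hm
        have h1 := f.comp.labL_eq m
        have h2 := f.comp.labR_eq m
        rw [hrefl m hm] at h1 h2
        rw [(reach T w0).labL_refl (f.comp.onState v)] at h1
        rw [(reach T w0).labR_refl (f.comp.onState v)] at h2
        show ((reach S v0).labL m, (reach S v0).labR m) = (eX, eY)
        rw [← h1, ← h2]
      have hlast : ((S.labL e'.val, S.labR e'.val) : X × Y) = (T.labL e, T.labR e) := by
        have h1 := f.comp.labL_eq e'
        have h2 := f.comp.labR_eq e'
        rw [he'] at h1 h2
        show ((reach S v0).labL e', (reach S v0).labR e') = _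
        rw [← h1, ← h2]
        rfl
      have hlen : (l ++ [e']).length - 1 = l.length := by simp
      rw [hlen, List.map_append]
      congr 1
      · refine List.eq_replicate_iff.2 ⟨by simp, ?_⟩
        intro b hb
        obtain ⟨m, hm, rfl⟩ := List.mem_map.1 hb
        exact hlab m hm
      · simp [hlast]

noncomputable def nextD (f : Simulation S T v0 w0) {s : Stream'.Seq T.Motion}
    (hs : IsBehaviour T w0 s) (k : ℕ) (v : (reach S v0).State)
    (hv : (f.comp.onState v).val = stateAfter T w0 s k) :
    List ((reach S v0).Motion) × (reach S v0).State :=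
  Classical.choose (key f hs k v hv)

lemma nextD_spec (f : Simulation S T v0 w0) {s : Stream'.Seq T.Motion}
    (hs : IsBehaviour T w0 s) (k : ℕ) (v : (reach S v0).State)
    (hv : (f.comp.onState v).val = stateAfter T w0 s k) :
    IsPath (reach S v0) v (nextD f hs k v hv).1 (nextD f hs k v hv).2 ∧
      (f.comp.onState (nextD f hs k v hv).2).val = stateAfter T w0 s (k + 1) ∧
      (s.get? k = none → (nextD f hs k v hv).1 = [] ∧ (nextD f hs k v hv).2 = v) ∧
      ∀ e, s.get? k = some e →
        (nextD f hs k v hv).1 ≠ [] ∧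
        (nextD f hs k v hv).1.map (fun m => (S.labL m.val, S.labR m.val)) =
          List.replicate ((nextD f hs k v hv).1.length - 1) (eX, eY) ++
            [(T.labL e, T.labR e)] :=
  Classical.choose_spec (key f hs k v hv)

noncomputable def chain (f : Simulation S T v0 w0) {s : Stream'.Seq T.Motion}
    (hs : IsBehaviour T w0 s) :
    (k : ℕ) → {v : (reach S v0).State // (f.comp.onState v).val = stateAfter T w0 s k}
  | 0 => ⟨reachInit S v0, by simpa [stateAfter] using f.init⟩
  | k + 1 => ⟨(nextD f hs k (chain f hs k).1 (chain f hs k).2).2,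
      (nextD_spec f hs k (chain f hs k).1 (chain f hs k).2).2.1⟩

noncomputable def chunk (f : Simulation S T v0 w0) {s : Stream'.Seq T.Motion}
    (hs : IsBehaviour T w0 s) (k : ℕ) : List ((reach S v0).Motion) :=
  (nextD f hs k (chain f hs k).1 (chain f hs k).2).1

lemma chunk_path (f : Simulation S T v0 w0) {s : Stream'.Seq T.Motion}
    (hs : IsBehaviour T w0 s) (k : ℕ) :
    IsPath (reach S v0) (chain f hs k).1 (chunk f hs k) (chain f hs (k + 1)).1 :=
  (nextD_spec f hs k (chain f hs k).1 (chain f hs k).2).1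

lemma chunk_nil (f : Simulation S T v0 w0) {s : Stream'.Seq T.Motion}
    (hs : IsBehaviour T w0 s) {k : ℕ} (hk : s.get? k = none) : chunk f hs k = [] :=
  ((nextD_spec f hs k (chain f hs k).1 (chain f hs k).2).2.2.1 hk).1

lemma chunk_ne (f : Simulation S T v0 w0) {s : Stream'.Seq T.Motion}
    (hs : IsBehaviour T w0 s) {k : ℕ} {e} (hk : s.get? k = some e) : chunk f hs k ≠ [] :=
  ((nextD_spec f hs k (chain f hs k).1 (chain f hs k).2).2.2.2 e hk).1

lemma chunk_lab (f : Simulation S T v0 w0) {s : Stream'.Seq T.Motion}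
    (hs : IsBehaviour T w0 s) {k : ℕ} {e} (hk : s.get? k = some e) :
    (chunk f hs k).map (fun m => (S.labL m.val, S.labR m.val)) =
      List.replicate ((chunk f hs k).length - 1) (eX, eY) ++ [(T.labL e, T.labR e)] :=
  ((nextD_spec f hs k (chain f hs k).1 (chain f hs k).2).2.2.2 e hk).2

/-- concatenation of the first `k` chunks -/
noncomputable def pre (f : Simulation S T v0 w0) {s : Stream'.Seq T.Motion}
    (hs : IsBehaviour T w0 s) : ℕ → List ((reach S v0).Motion)
  | 0 => []
  | k + 1 => pre f hs k ++ chunk f hs k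

lemma pre_path (f : Simulation S T v0 w0) {s : Stream'.Seq T.Motion}
    (hs : IsBehaviour T w0 s) (k : ℕ) :
    IsPath (reach S v0) (reachInit S v0) (pre f hs k) (chain f hs k).1 := by
  induction k with
  | zero => simp [pre, IsPath, chain]
  | succ k ih =>
    show IsPath _ _ (pre f hs k ++ chunk f hs k) _
    exact (isPath_append _ _ _ _ _).2 ⟨_, ih, chunk_path f hs k⟩

lemma pre_prefix (f : Simulation S T v0 w0) {s : Stream'.Seq T.Motion}
    (hs : IsBehaviour T w0 s) {k K : ℕ} (h : k ≤ K) :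
    ∃ r, pre f hs K = pre f hs k ++ r := by
  induction K with
  | zero =>
    rw [Nat.le_zero.1 h]
    exact ⟨[], by simp⟩
  | succ K ih =>
    rcases Nat.lt_or_ge k (K + 1) with h' | h'
    · obtain ⟨r, hr⟩ := ih (Nat.lt_succ_iff.1 h')
      exact ⟨r ++ chunk f hs K, by show pre f hs K ++ _ = _; rw [hr, List.append_assoc]⟩
    · have : k = K + 1 := le_antisymm h h'
      subst this
      exact ⟨[], by simp⟩

lemma pre_len_mono (f : Simulation S T v0 w0) {s : Stream'.Seq T.Motion}
    (hs : IsBehaviour T w0 s) {k K : ℕ} (h : k ≤ K) :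
    (pre f hs k).length ≤ (pre f hs K).length := by
  obtain ⟨r, hr⟩ := pre_prefix f hs h
  rw [hr]; simp

lemma pre_len_ge (f : Simulation S T v0 w0) {s : Stream'.Seq T.Motion}
    (hs : IsBehaviour T w0 s) {k : ℕ} (h : ∀ j, j < k → s.get? j ≠ none) :
    k ≤ (pre f hs k).length := by
  induction k with
  | zero => simp
  | succ k ih =>
    have h1 : k ≤ (pre f hs k).length := ih fun j hj => h j (Nat.lt_succ_of_lt hj)
    obtain ⟨e, he⟩ := Option.ne_none_iff_exists'.1 (h k (Nat.lt_succ_self k))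
    have h2 : 1 ≤ (chunk f hs k).length :=
      List.length_pos_iff.2 (chunk_ne f hs he)
    show k + 1 ≤ (pre f hs k ++ chunk f hs k).length
    rw [List.length_append]
    omega

lemma pre_stable (f : Simulation S T v0 w0) {s : Stream'.Seq T.Motion}
    (hs : IsBehaviour T w0 s) {k : ℕ} (hk : s.get? k = none) {K : ℕ} (h : k ≤ K) :
    pre f hs K = pre f hs k := by
  induction K with
  | zero => rw [Nat.le_zero.1 h]
  | succ K ih =>
    rcases Nat.lt_or_ge k (K + 1) with h' | h'
    · have hK : k ≤ K := Nat.lt_succ_iff.1 h'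
      have hnone : s.get? K = none := Stream'.Seq.le_stable s hK hk
      show pre f hs K ++ chunk f hs K = pre f hs k
      rw [chunk_nil f hs hnone, List.append_nil]
      exact ih hK
    · have : k = K + 1 := le_antisymm h h'
      rw [this]

lemma pre_get_stable (f : Simulation S T v0 w0) {s : Stream'.Seq T.Motion}
    (hs : IsBehaviour T w0 s) {n K : ℕ} (h : n < K) :
    (pre f hs K)[n]? = (pre f hs (n + 1))[n]? := by
  by_cases hall : ∀ j, j < n + 1 → s.get? j ≠ none
  · have hlen : n + 1 ≤ (pre f hs (n + 1)).length := pre_len_ge f hs hall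
    obtain ⟨r, hr⟩ := pre_prefix f hs (show n + 1 ≤ K from h)
    rw [hr, List.getElem?_append_left (by omega)]
  · push_neg at hall
    obtain ⟨j, hj, hjn⟩ := hall
    rw [pre_stable f hs hjn (by omega : j ≤ K),
      pre_stable f hs hjn (by omega : j ≤ n + 1)]

noncomputable def sS (f : Simulation S T v0 w0) {s : Stream'.Seq T.Motion}
    (hs : IsBehaviour T w0 s) : Stream'.Seq S.Motion :=
  ⟨fun n => ((pre f hs (n + 1))[n]?).map Subtype.val, by
    intro n hn
    have h1 : (pre f hs (n + 1)).length ≤ n := by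
      have hn := Option.map_eq_none_iff.1 hn
      exact List.getElem?_eq_none_iff.1 hn
    apply Option.map_eq_none_iff.2
    apply List.getElem?_eq_none_iff.2
    by_cases hall : ∀ j, j < n + 1 → s.get? j ≠ none
    · exact absurd (pre_len_ge f hs hall) (by omega)
    · push_neg at hall
      obtain ⟨j, hj, hjn⟩ := hall
      rw [pre_stable f hs hjn (by omega : j ≤ n + 2)]
      rw [pre_stable f hs hjn (by omega : j ≤ n + 1)] at h1
      omega⟩

lemma sS_get (f : Simulation S T v0 w0) {s : Stream'.Seq T.Motion}
    (hs : IsBehaviour T w0 s) {n K : ℕ} (h : n < K) :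
    (sS f hs).get? n = ((pre f hs K)[n]?).map Subtype.val := by
  show ((pre f hs (n + 1))[n]?).map Subtype.val = _
  rw [pre_get_stable f hs h]

lemma all_some_before (f : Simulation S T v0 w0) {s : Stream'.Seq T.Motion}
    (hs : IsBehaviour T w0 s) {k : ℕ} {e} (hk : s.get? k = some e) :
    ∀ j, j < k → s.get? j ≠ none := by
  intro j hj hnone
  rw [Stream'.Seq.le_stable s (le_of_lt hj) hnone] at hk
  exact absurd hk (by simp)

lemma sS_elem (f : Simulation S T v0 w0) {s : Stream'.Seq T.Motion}
    (hs : IsBehaviour T w0 s) {k j : ℕ} {e} (hk : s.get? k = some e)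
    (hj : j < (chunk f hs k).length) :
    (sS f hs).get? ((pre f hs k).length + j) = ((chunk f hs k)[j]?).map Subtype.val := by
  have hkk : k ≤ (pre f hs k).length := pre_len_ge f hs (all_some_before f hs hk)
  set n := (pre f hs k).length + j with hn
  have hlen1 : (pre f hs (k + 1)).length = (pre f hs k).length + (chunk f hs k).length := by
    show (pre f hs k ++ chunk f hs k).length = _
    simp
  have h1 : n < (pre f hs (k + 1)).length := by omega
  have h2 : (sS f hs).get? n = ((pre f hs (n + 1))[n]?).map Subtype.val := rfl
  rw [h2]
  obtain ⟨r, hr⟩ := pre_prefix f hs (show k + 1 ≤ n + 1 by omega)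
  rw [hr, List.getElem?_append_left h1]
  show ((pre f hs k ++ chunk f hs k)[n]?).map Subtype.val = _
  rw [List.getElem?_append_right (by omega : (pre f hs k).length ≤ n)]
  congr 2
  omega

lemma sS_none (f : Simulation S T v0 w0) {s : Stream'.Seq T.Motion}
    (hs : IsBehaviour T w0 s) {k0 : ℕ} (hmin : ∀ j, j < k0 → s.get? j ≠ none)
    (h0 : s.get? k0 = none) {n : ℕ} (hn : (pre f hs k0).length ≤ n) :
    (sS f hs).get? n = none := by
  have hk0 : k0 ≤ (pre f hs k0).length := pre_len_ge f hs hmin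
  show ((pre f hs (n + 1))[n]?).map Subtype.val = none
  rw [pre_stable f hs h0 (by omega : k0 ≤ n + 1)]
  apply Option.map_eq_none_iff.2
  exact List.getElem?_eq_none_iff.2 (by omega)

lemma pre_decomp (f : Simulation S T v0 w0) {s : Stream'.Seq T.Motion}
    (hs : IsBehaviour T w0 s) :
    ∀ (K n : ℕ) (m : (reach S v0).Motion), (pre f hs K)[n]? = some m →
      ∃ k j, j < (chunk f hs k).length ∧ n = (pre f hs k).length + j ∧
        (chunk f hs k)[j]? = some m := by
  intro K
  induction K with
  | zero => intro n m h; simp [pre] at h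
  | succ K ih =>
    intro n m h
    rw [show pre f hs (K + 1) = pre f hs K ++ chunk f hs K from rfl] at h
    by_cases hlt : n < (pre f hs K).length
    · rw [List.getElem?_append_left hlt] at h
      exact ih n m h
    · push_neg at hlt
      rw [List.getElem?_append_right hlt] at h
      refine ⟨K, n - (pre f hs K).length, ?_, by omega, h⟩
      by_contra hcon
      push_neg at hcon
      rw [List.getElem?_eq_none_iff.2 hcon] at h
      exact absurd h (by simp)

lemma sS_decomp (f : Simulation S T v0 w0) {s : Stream'.Seq T.Motion}
    (hs : IsBehaviour T w0 s) {n : ℕ} {m : S.Motion} (h : (sS f hs).get? n = some m) :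
    ∃ (k j : ℕ) (m' : (reach S v0).Motion), j < (chunk f hs k).length ∧
      n = (pre f hs k).length + j ∧ (chunk f hs k)[j]? = some m' ∧ m'.val = m ∧
      s.get? k ≠ none := by
  have h2 : ((pre f hs (n + 1))[n]?).map Subtype.val = some m := h
  obtain ⟨m', hm', hval⟩ := Option.map_eq_some_iff.1 h2
  obtain ⟨k, j, hj, hn, hkj⟩ := pre_decomp f hs (n + 1) n m' hm'
  refine ⟨k, j, m', hj, hn, hkj, hval, ?_⟩
  intro hnone
  rw [chunk_nil f hs hnone] at hj
  simp at hj

lemma sS_behaviour (f : Simulation S T v0 w0) {s : Stream'.Seq T.Motion}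
    (hs : IsBehaviour T w0 s) : IsBehaviour S v0 (sS f hs) := by
  constructor
  · intro m hm
    rw [sS_get f hs (Nat.lt_succ_self 0)] at hm
    obtain ⟨m', hm', hval⟩ := Option.map_eq_some_iff.1 hm
    have hhead := isPath_head (pre_path f hs 1) hm'
    have := congrArg Subtype.val hhead
    rw [← hval]
    exact this
  · intro k m m' hm hm'
    rw [sS_get f hs (show k < k + 2 by omega)] at hm
    rw [sS_get f hs (show k + 1 < k + 2 by omega)] at hm'
    obtain ⟨a, ha, hva⟩ := Option.map_eq_some_iff.1 hm
    obtain ⟨b, hb, hvb⟩ := Option.map_eq_some_iff.1 hm'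
    have hadj := isPath_adj (pre_path f hs (k + 2)) ha hb
    have := congrArg Subtype.val hadj
    rw [← hva, ← hvb]
    exact this

/-- the position of the "real" motion of chunk `k` inside the concatenation -/
noncomputable def pos (f : Simulation S T v0 w0) {s : Stream'.Seq T.Motion}
    (hs : IsBehaviour T w0 s) (k : ℕ) : ℕ :=
  (pre f hs k).length + ((chunk f hs k).length - 1)

lemma sS_lab_at (f : Simulation S T v0 w0) {s : Stream'.Seq T.Motion}
    (hs : IsBehaviour T w0 s) {k : ℕ} {e} (hk : s.get? k = some e) {j : ℕ}
    (hj : j < (chunk f hs k).length) :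
    ((sS f hs).map fun e => (S.labL e, S.labR e)).get? ((pre f hs k).length + j) =
      some (if j = (chunk f hs k).length - 1 then (T.labL e, T.labR e) else (eX, eY)) := by
  rw [Stream'.Seq.map_get?, sS_elem f hs hk hj]
  erw [Option.map_map]
  have : ((chunk f hs k)[j]?).map ((fun e => (S.labL e, S.labR e)) ∘ Subtype.val) =
      ((chunk f hs k).map fun m => (S.labL m.val, S.labR m.val))[j]? := by
    rw [List.getElem?_map]
    rfl
  rw [this, chunk_lab f hs hk]
  have hlen : (List.replicate ((chunk f hs k).length - 1) ((eX, eY) : X × Y)).length =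
      (chunk f hs k).length - 1 := List.length_replicate
  by_cases hcase : j = (chunk f hs k).length - 1
  · rw [if_pos hcase, List.getElem?_append_right (by omega), hlen, hcase]
    simp
  · rw [if_neg hcase, List.getElem?_append_left (by omega)]
    rw [List.getElem?_eq_getElem (by omega)]
    simp

lemma pos_lab (f : Simulation S T v0 w0) {s : Stream'.Seq T.Motion}
    (hs : IsBehaviour T w0 s) {k : ℕ} {e} (hk : s.get? k = some e) :
    ((sS f hs).map fun e => (S.labL e, S.labR e)).get? (pos f hs k) =
      some (T.labL e, T.labR e) := by
  have hne : 1 ≤ (chunk f hs k).length := List.length_pos_iff.2 (chunk_ne f hs hk)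
  have := sS_lab_at f hs hk (show (chunk f hs k).length - 1 < (chunk f hs k).length by omega)
  rw [if_pos rfl] at this
  exact this

lemma pos_mono (f : Simulation S T v0 w0) {s : Stream'.Seq T.Motion}
    (hs : IsBehaviour T w0 s) {k k' : ℕ} (hk : s.get? k ≠ none) (h : k < k') :
    pos f hs k < pos f hs k' := by
  obtain ⟨e, he⟩ := Option.ne_none_iff_exists'.1 hk
  have hne : 1 ≤ (chunk f hs k).length := List.length_pos_iff.2 (chunk_ne f hs he)
  have h1 : (pre f hs (k + 1)).length = (pre f hs k).length + (chunk f hs k).length := by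
    show (pre f hs k ++ chunk f hs k).length = _
    simp
  have h2 : (pre f hs (k + 1)).length ≤ (pre f hs k').length := pre_len_mono f hs h
  show (pre f hs k).length + ((chunk f hs k).length - 1) <
    (pre f hs k').length + ((chunk f hs k').length - 1)
  omega

lemma pos_lt_len (f : Simulation S T v0 w0) {s : Stream'.Seq T.Motion}
    (hs : IsBehaviour T w0 s) {k k0 : ℕ} (hk : s.get? k ≠ none) (h : k < k0) :
    pos f hs k < (pre f hs k0).length := by
  obtain ⟨e, he⟩ := Option.ne_none_iff_exists'.1 hk
  have hne : 1 ≤ (chunk f hs k).length := List.length_pos_iff.2 (chunk_ne f hs he)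
  have h1 : (pre f hs (k + 1)).length = (pre f hs k).length + (chunk f hs k).length := by
    show (pre f hs k ++ chunk f hs k).length = _
    simp
  have h2 : (pre f hs (k + 1)).length ≤ (pre f hs k0).length := pre_len_mono f hs h
  show (pre f hs k).length + ((chunk f hs k).length - 1) < _
  omega

end AuxProof

section MainLemmas

open Stream'

variable {X Y : Type} {eX : X} {eY : Y} {S T : Aut X Y eX eY} {v0 : S.State} {w0 : T.State}

lemma forward_dir (f : Simulation S T v0 w0) {s : Stream'.Seq S.Motion}
    (hs : IsBehaviour S v0 s) {t : Stream'.Seq (X × Y)}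
    (hred : IsReducedOf (eX, eY) (s.map fun e => (S.labL e, S.labR e)) t) :
    ∃ s' : Stream'.Seq T.Motion, IsBehaviour T w0 s' ∧
      IsReducedOf (eX, eY) (s'.map fun e => (T.labL e, T.labR e)) t := by
  classical
  set g : S.Motion → T.Motion := fun e =>
    if h : Reaches S v0 (S.src e) ∧ Reaches S v0 (S.tgt e)
    then (f.comp.onMotion ⟨e, h⟩).val else T.refl w0 with hg
  have hgsrc : ∀ (e : S.Motion) (h : Reaches S v0 (S.src e) ∧ Reaches S v0 (S.tgt e)),
      T.src (g e) = (f.comp.onState ⟨S.src e, h.1⟩).val := by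
    intro e h
    rw [hg]
    simp only [dif_pos h]
    exact congrArg Subtype.val (f.comp.src_eq ⟨e, h⟩)
  have hgtgt : ∀ (e : S.Motion) (h : Reaches S v0 (S.src e) ∧ Reaches S v0 (S.tgt e)),
      T.tgt (g e) = (f.comp.onState ⟨S.tgt e, h.2⟩).val := by
    intro e h
    rw [hg]
    simp only [dif_pos h]
    exact congrArg Subtype.val (f.comp.tgt_eq ⟨e, h⟩)
  refine ⟨s.map g, ⟨?_, ?_⟩, ?_⟩
  · intro m hm
    rw [Stream'.Seq.map_get?] at hm
    obtain ⟨e, he, hval⟩ := Option.map_eq_some_iff.1 hm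
    subst hval
    have h := behaviour_reaches hs he
    rw [hgsrc e h]
    have hstate : (⟨S.src e, h.1⟩ : (reach S v0).State) = reachInit S v0 :=
      Subtype.ext (hs.1 e he)
    rw [hstate, f.init]
  · intro k m m' hm hm'
    rw [Stream'.Seq.map_get?] at hm hm'
    obtain ⟨e, he, hval⟩ := Option.map_eq_some_iff.1 hm
    obtain ⟨e', he', hval'⟩ := Option.map_eq_some_iff.1 hm'
    subst hval; subst hval'
    have h := behaviour_reaches hs he
    have h' := behaviour_reaches hs he'
    rw [hgsrc e' h', hgtgt e h]
    have hstate : (⟨S.src e', h'.1⟩ : (reach S v0).State) = ⟨S.tgt e, h.2⟩ :=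
      Subtype.ext (hs.2 k e e' he he')
    rw [hstate]
  · have heq : (s.map g).map (fun e => (T.labL e, T.labR e)) =
        s.map fun e => (S.labL e, S.labR e) := by
      apply Subtype.ext
      funext n
      show ((s.map g).map fun e => (T.labL e, T.labR e)).get? n =
        (s.map fun e => (S.labL e, S.labR e)).get? n
      rw [Stream'.Seq.map_get?, Stream'.Seq.map_get?, Stream'.Seq.map_get?]
      cases he : s.get? n with
      | none => rfl
      | some e =>
        simp only [Option.map_some]
        congr 1
        have h := behaviour_reaches hs he
        have h1 := f.comp.labL_eq ⟨e, h⟩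
        have h2 := f.comp.labR_eq ⟨e, h⟩
        rw [hg]
        simp only [dif_pos h]
        show ((reach T w0).labL (f.comp.onMotion ⟨e, h⟩),
          (reach T w0).labR (f.comp.onMotion ⟨e, h⟩)) = _
        rw [h1, h2]
        rfl
    rw [heq]
    exact hred

lemma backward_dir (f : Simulation S T v0 w0) {s : Stream'.Seq T.Motion}
    (hs : IsBehaviour T w0 s) {t : Stream'.Seq (X × Y)}
    (hred : IsReducedOf (eX, eY) (s.map fun e => (T.labL e, T.labR e)) t) :
    ∃ s' : Stream'.Seq S.Motion, IsBehaviour S v0 s' ∧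
      IsReducedOf (eX, eY) (s'.map fun e => (S.labL e, S.labR e)) t := by
  classical
  obtain ⟨φ, hmono, hiff, hsurj⟩ := hred
  refine ⟨sS f hs, sS_behaviour f hs, ?_⟩
  by_cases hfin : ∃ k, s.get? k = none
  · -- finite case
    set k0 := Nat.find hfin with hk0def
    have h0 : s.get? k0 = none := Nat.find_spec hfin
    have hmin : ∀ j, j < k0 → s.get? j ≠ none := fun j hj => Nat.find_min hfin hj
    refine ⟨fun m => if φ m < k0 then pos f hs (φ m) else (pre f hs k0).length + m,
      ?_, ?_, ?_⟩
    · -- strict mono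
      intro m m' hlt
      simp only
      by_cases hm' : φ m' < k0
      · have hm : φ m < k0 := lt_trans (hmono hlt) hm'
        rw [if_pos hm, if_pos hm']
        exact pos_mono f hs (hmin _ hm) (hmono hlt)
      · rw [if_neg hm']
        by_cases hm : φ m < k0
        · rw [if_pos hm]
          have := pos_lt_len f hs (hmin _ hm) hm
          omega
        · rw [if_neg hm]
          omega
    · -- the iff condition
      intro m a
      simp only
      by_cases hm : φ m < k0
      · rw [if_pos hm]
        obtain ⟨e, he⟩ := Option.ne_none_iff_exists'.1 (hmin _ hm)
        rw [hiff m a, Stream'.Seq.map_get?, he, pos_lab f hs he]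
        simp
      · rw [if_neg hm]
        have hφnone : s.get? (φ m) = none := Stream'.Seq.le_stable s (by omega) h0
        constructor
        · intro h
          have := (hiff m a).1 h
          rw [Stream'.Seq.map_get?, hφnone] at this
          exact absurd this.1 (by simp)
        · intro h
          rw [Stream'.Seq.map_get?, sS_none f hs hmin h0 (by omega)] at h
          exact absurd h.1 (by simp)
    · -- surjectivity
      intro n a hn hne
      rw [Stream'.Seq.map_get?] at hn
      obtain ⟨m0, hm0, ha⟩ := Option.map_eq_some_iff.1 hn
      obtain ⟨k, j, m', hj, hn', hkj, hval, hksome⟩ := sS_decomp f hs hm0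
      obtain ⟨e, hk⟩ := Option.ne_none_iff_exists'.1 hksome
      have hlabn := sS_lab_at f hs hk hj
      rw [← hn'] at hlabn
      rw [Stream'.Seq.map_get?, hm0] at hlabn
      simp only [Option.map_some] at hlabn
      injection hlabn with hlabn
      rw [ha] at hlabn
      by_cases hcase : j = (chunk f hs k).length - 1
      · rw [if_pos hcase] at hlabn
        have hslab : (s.map fun e => (T.labL e, T.labR e)).get? k = some a := by
          rw [Stream'.Seq.map_get?, hk, hlabn]
          rfl
        obtain ⟨m, hφm⟩ := hsurj k a hslab hne
        refine ⟨m, ?_⟩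
        simp only
        have hkk0 : k < k0 := by
          rcases Nat.lt_or_ge k k0 with h | h
          · exact h
          · exact absurd (Stream'.Seq.le_stable s h h0) hksome
        rw [hφm, if_pos hkk0]
        show (pre f hs k).length + ((chunk f hs k).length - 1) = n
        omega
      · rw [if_neg hcase] at hlabn
        exact absurd hlabn hne
  · -- infinite case
    push_neg at hfin
    refine ⟨fun m => pos f hs (φ m), ?_, ?_, ?_⟩
    · intro m m' hlt
      exact pos_mono f hs (hfin _) (hmono hlt)
    · intro m a
      obtain ⟨e, he⟩ := Option.ne_none_iff_exists'.1 (hfin (φ m))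
      rw [hiff m a, Stream'.Seq.map_get?, he]
      simp only
      rw [pos_lab f hs he]
      simp
    · intro n a hn hne
      rw [Stream'.Seq.map_get?] at hn
      obtain ⟨m0, hm0, ha⟩ := Option.map_eq_some_iff.1 hn
      obtain ⟨k, j, m', hj, hn', hkj, hval, hksome⟩ := sS_decomp f hs hm0
      obtain ⟨e, hk⟩ := Option.ne_none_iff_exists'.1 hksome
      have hlabn := sS_lab_at f hs hk hj
      rw [← hn'] at hlabn
      rw [Stream'.Seq.map_get?, hm0] at hlabn
      simp only [Option.map_some] at hlabn
      injection hlabn with hlabn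
      rw [ha] at hlabn
      by_cases hcase : j = (chunk f hs k).length - 1
      · rw [if_pos hcase] at hlabn
        have hslab : (s.map fun e => (T.labL e, T.labR e)).get? k = some a := by
          rw [Stream'.Seq.map_get?, hk, hlabn]
          rfl
        obtain ⟨m, hφm⟩ := hsurj k a hslab hne
        refine ⟨m, ?_⟩
        simp only
        rw [hφm]
        show (pre f hs k).length + ((chunk f hs k).length - 1) = n
        omega
      · rw [if_neg hcase] at hlabn
        exact absurd hlabn hne

end MainLemmas

/-- If there is a simulation `f : S ⇒ T` then `S` and `T` have the same set
of reduced appearances of behaviours from their initial states. -/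
theorem simulation_same_reduced_appearances {X Y : Type} {eX : X} {eY : Y}
    (S T : Aut X Y eX eY) (v0 : S.State) (w0 : T.State)
    (f : Simulation S T v0 w0) :
    ∀ t : Stream'.Seq (X × Y),
      (∃ s : Stream'.Seq S.Motion, IsBehaviour S v0 s ∧
        IsReducedOf (eX, eY) (s.map fun e => (S.labL e, S.labR e)) t) ↔
      (∃ s : Stream'.Seq T.Motion, IsBehaviour T w0 s ∧
        IsReducedOf (eX, eY) (s.map fun e => (T.labL e, T.labR e)) t) := by
  intro t
  constructor
  · rintro ⟨s, h1, h2⟩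
    exact forward_dir f h1 h2
  · rintro ⟨s, h1, h2⟩
    exact backward_dir f h1 h2
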